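/- Proposition 3 of the paper (syndrome measurements), stated as a cycle-space membership: let n, m ∈ ℕ and let s : Fin n → V_m be stabilizer labels with ⟨s_i, s_j⟩ = 0 for all i, j; write S(x) := Σ_{i : x_i = 1} s_i for x ∈ Z2^n. Let g : V_{m+n} → V_{m+n} be a map such that g(Q⊞x) = (Q + S(x))⊞x for every x ∈ Z2^n and every Q ∈ V_m with ⟨s_i, Q⟩ = 0 for all i. Let P ∈ V_m satisfy ⟨s_i, P⟩ = 0 for all i, and let a ∈ Z2^n with a ≠ 0. Then in the free ℝ-module on Pauli weight patterns one has Σ_{x,y,k ∈ Z2^n} Σ_{Q ∈ V_m} (-1)^{⟨S(k) + P, Q⟩} · ((-1)^{a·x} + (-1)^{a·y}) · ([pt(Q⊞y)] − [pt(g(Q⊞x))]) = 0; i.e., the 1-chain Σ_{x,y,k,Q} (-1)^{⟨S(k)P, Q⟩} [(-1)^{a·x} + (-1)^{a·y}] e^Q_{x,y} of the pattern transfer graph has zero boundary. -/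

import Mathlib

open Finset

/-- `m`-qubit Pauli operators modulo phase, as pairs of X- and Z-exponents per qubit. -/
abbrev V (m : ℕ) := Fin m → ZMod 2 × ZMod 2

/-- Symplectic inner product recording (non-)commutation of Pauli operators. -/
def sympl {m : ℕ} (P Q : V m) : ZMod 2 :=
  ∑ i, ((P i).1 * (Q i).2 + (P i).2 * (Q i).1)

/-- Dot product on `Z2^n`. -/
def dot {n : ℕ} (x y : Fin n → ZMod 2) : ZMod 2 := ∑ i, x i * y i

/-- The real sign `(-1)^z` associated with `z : ZMod 2`. -/
def sgn (z : ZMod 2) : ℝ := (-1 : ℝ) ^ z.val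

/-- Pauli weight pattern: `1` on qubits where the Pauli label is non-identity. -/
def pt {N : ℕ} (v : V N) : Fin N → ZMod 2 :=
  fun i => if v i = (0, 0) then 0 else 1

/-- `Q⊞x`: the `(m+n)`-qubit Pauli label of `Q ⊗ Z^x`. -/
def emb {m n : ℕ} (Q : V m) (x : Fin n → ZMod 2) : V (m + n) :=
  Fin.append Q (fun i => ((0 : ZMod 2), x i))

/-- `S(x) = Σ_{i : x_i = 1} s_i`: the label of the product of the stabilizers
selected by `x`. -/
def Sfun {n m : ℕ} (s : Fin n → V m) (x : Fin n → ZMod 2) : V m :=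
  ∑ i ∈ Finset.univ.filter (fun i => x i = 1), s i


lemma zmod2_eq_one_of_ne (u : ZMod 2) (h : u ≠ 0) : u = 1 := by
  revert h; revert u; decide

lemma zmod2_val_two : (2 : ZMod 2).val = 0 := rfl
lemma zmod2_val_one : (1 : ZMod 2).val = 1 := rfl

lemma sgn_add (u v : ZMod 2) : sgn (u + v) = sgn u * sgn v := by
  rcases (by decide : ∀ w : ZMod 2, w = 0 ∨ w = 1) u with rfl | rfl <;>
    rcases (by decide : ∀ w : ZMod 2, w = 0 ∨ w = 1) v with rfl | rfl <;>
    norm_num [sgn, zmod2_val_two, zmod2_val_one]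

lemma sgn_zero : sgn 0 = 1 := rfl
lemma sgn_one : sgn 1 = -1 := by norm_num [sgn, zmod2_val_one]

lemma sympl_add_left {m} (P Q R : V m) : sympl (P + Q) R = sympl P R + sympl Q R := by
  simp only [sympl, Pi.add_apply, Prod.fst_add, Prod.snd_add]
  rw [← Finset.sum_add_distrib]
  exact Finset.sum_congr rfl fun i _ => by ring

lemma sympl_comm {m} (P Q : V m) : sympl P Q = sympl Q P := by
  simp only [sympl]
  exact Finset.sum_congr rfl fun i _ => by ring

lemma sympl_add_right {m} (P Q R : V m) : sympl P (Q + R) = sympl P Q + sympl P R := by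
  rw [sympl_comm, sympl_add_left, sympl_comm Q P, sympl_comm R P]

def symplHom {m} (Q : V m) : V m →+ ZMod 2 where
  toFun P := sympl P Q
  map_zero' := by simp [sympl]
  map_add' P R := sympl_add_left P R Q

lemma dot_comm {n} (x y : Fin n → ZMod 2) : dot x y = dot y x := by
  simp only [dot]; exact Finset.sum_congr rfl fun i _ => by ring

lemma dot_add_right {n} (x y z : Fin n → ZMod 2) : dot x (y + z) = dot x y + dot x z := by
  simp only [dot, Pi.add_apply, mul_add]
  rw [Finset.sum_add_distrib]

lemma sympl_Sfun_left {n m} (s : Fin n → V m) (k : Fin n → ZMod 2) (Q : V m) :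
    sympl (Sfun s k) Q = dot k (fun i => sympl (s i) Q) := by
  have : sympl (Sfun s k) Q = ∑ i ∈ Finset.univ.filter (fun i => k i = 1), sympl (s i) Q :=
    map_sum (symplHom Q) _ _
  rw [this, Finset.sum_filter, dot]
  refine Finset.sum_congr rfl fun i _ => ?_
  rcases eq_or_ne (k i) 0 with h | h
  · simp [h]
  · rw [zmod2_eq_one_of_ne _ h]; simp

lemma sum_sgn_dot {n} (c : Fin n → ZMod 2) :
    ∑ x : Fin n → ZMod 2, sgn (dot c x) = if c = 0 then (2 ^ n : ℝ) else 0 := by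
  split_ifs with h
  · subst h
    have : ∀ x : Fin n → ZMod 2, sgn (dot 0 x) = 1 := by
      intro x; simp [dot, sgn_zero]
    simp only [this, Finset.sum_const, Finset.card_univ, nsmul_eq_mul, mul_one]
    rw [Fintype.card_fun]
    simp [ZMod.card]
  · obtain ⟨i, hi⟩ : ∃ i, c i ≠ 0 := by
      by_contra h'; push_neg at h'; exact h (funext h')
    have hδ : dot c (Pi.single i 1) = 1 := by
      rw [dot, Finset.sum_eq_single i]
      · rw [Pi.single_eq_same, mul_one, zmod2_eq_one_of_ne _ hi]
      · intro j _ hj; rw [Pi.single_eq_of_ne hj, mul_zero]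
      · simp
    have key : ∑ x : Fin n → ZMod 2, sgn (dot c x)
        = ∑ x : Fin n → ZMod 2, sgn (dot c (x + Pi.single i 1)) :=
      (Fintype.sum_equiv (Equiv.addRight (Pi.single i 1)) _ _ (fun x => rfl)).symm
    have hneg : ∀ x : Fin n → ZMod 2, sgn (dot c (x + Pi.single i 1)) = -sgn (dot c x) := by
      intro x
      rw [dot_add_right, hδ, sgn_add, sgn_one]; ring
    have hTT : (∑ x : Fin n → ZMod 2, sgn (dot c x))
        = -(∑ x : Fin n → ZMod 2, sgn (dot c x)) := by
      conv_lhs => rw [key]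
      simp only [hneg]
      rw [Finset.sum_neg_distrib]
    linarith
lemma zmod2_add_self (u : ZMod 2) : u + u = 0 := by fin_cases u <;> rfl

lemma addV_self {m : ℕ} (v : V m) : v + v = 0 := by
  funext i
  refine Prod.ext ?_ ?_ <;>
    simp [Pi.add_apply, Prod.fst_add, Prod.snd_add, zmod2_add_self]

/-- Proposition 3 of the paper (syndrome measurements), as a cycle-space membership:
for `P` commuting with all stabilizers and `a ≠ 0`, the 1-chain
`Σ_{x,y,k,Q} (-1)^{⟨S(k)P,Q⟩} [(-1)^{a·x} + (-1)^{a·y}] e^Q_{x,y}` has zero boundary. -/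
theorem stmt_8 (n m : ℕ) (s : Fin n → V m)
    (hs : ∀ i j, sympl (s i) (s j) = 0)
    (g : V (m + n) → V (m + n))
    (hg : ∀ (x : Fin n → ZMod 2) (Q : V m), (∀ i, sympl (s i) Q = 0) →
      g (emb Q x) = emb (Q + Sfun s x) x)
    (P : V m) (hP : ∀ i, sympl (s i) P = 0)
    (a : Fin n → ZMod 2) (ha : a ≠ 0) :
    ∑ x : Fin n → ZMod 2, ∑ y : Fin n → ZMod 2, ∑ k : Fin n → ZMod 2, ∑ Q : V m,
      (sgn (sympl (Sfun s k + P) Q) * (sgn (dot a x) + sgn (dot a y))) •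
        (Finsupp.single (pt (emb Q y)) (1 : ℝ) -
          Finsupp.single (pt (g (emb Q x))) (1 : ℝ)) = 0 := by
  classical
  set e : (Fin n → ZMod 2) → ℝ := fun x => sgn (dot a x) with he_def
  have hesum : ∑ x : Fin n → ZMod 2, e x = 0 := by
    have h := sum_sgn_dot a
    rwa [if_neg ha] at h
  set F : V m → ℝ := fun Q =>
    (if ∀ i, sympl (s i) Q = 0 then (2 ^ n : ℝ) else 0) * sgn (sympl P Q) with hF
  have claimA : ∀ Q : V m,
      (∑ k : Fin n → ZMod 2, sgn (sympl (Sfun s k + P) Q)) = F Q := by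
    intro Q
    have h1 : ∀ k : Fin n → ZMod 2, sgn (sympl (Sfun s k + P) Q)
        = sgn (dot (fun i => sympl (s i) Q) k) * sgn (sympl P Q) := by
      intro k
      rw [sympl_add_left, sgn_add, sympl_Sfun_left, dot_comm]
    simp only [h1]
    rw [← Finset.sum_mul, sum_sgn_dot]
    simp only [hF, funext_iff, Pi.zero_apply]
  have hSx : ∀ (x : Fin n → ZMod 2) (i : Fin n), sympl (s i) (Sfun s x) = 0 := by
    intro x i
    rw [sympl_comm, sympl_Sfun_left]
    simp [dot, hs]
  have hPSx : ∀ x : Fin n → ZMod 2, sympl P (Sfun s x) = 0 := by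
    intro x
    rw [sympl_comm, sympl_Sfun_left]
    simp [dot, hP]
  have hFinv : ∀ (x : Fin n → ZMod 2) (Q : V m), F (Q + Sfun s x) = F Q := by
    intro x Q
    have h1 : ∀ i, sympl (s i) (Q + Sfun s x) = sympl (s i) Q := by
      intro i; rw [sympl_add_right, hSx, add_zero]
    have h2 : sympl P (Q + Sfun s x) = sympl P Q := by
      rw [sympl_add_right, hPSx, add_zero]
    simp only [hF, h1, h2]
  have hcard : (2 ^ n : ℝ) = (Fintype.card (Fin n → ZMod 2) : ℝ) := by
    rw [Fintype.card_fun]; simp [ZMod.card]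
  have hsum1 : ∀ y : Fin n → ZMod 2,
      (∑ x : Fin n → ZMod 2, (e x + e y)) = (2 ^ n : ℝ) * e y := by
    intro y
    rw [Finset.sum_add_distrib, hesum, Finset.sum_const, Finset.card_univ, zero_add,
      nsmul_eq_mul, hcard]
  -- Step 1: sum over k
  have step1 : (∑ x : Fin n → ZMod 2, ∑ y : Fin n → ZMod 2, ∑ k : Fin n → ZMod 2, ∑ Q : V m,
      (sgn (sympl (Sfun s k + P) Q) * (e x + e y)) •
        (Finsupp.single (pt (emb Q y)) (1 : ℝ) -
          Finsupp.single (pt (g (emb Q x))) (1 : ℝ)))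
      = ∑ x : Fin n → ZMod 2, ∑ y : Fin n → ZMod 2, ∑ Q : V m,
      (F Q * (e x + e y)) •
        (Finsupp.single (pt (emb Q y)) (1 : ℝ) -
          Finsupp.single (pt (g (emb Q x))) (1 : ℝ)) := by
    refine Finset.sum_congr rfl fun x _ => Finset.sum_congr rfl fun y _ => ?_
    rw [Finset.sum_comm]
    refine Finset.sum_congr rfl fun Q _ => ?_
    calc ∑ k : Fin n → ZMod 2, (sgn (sympl (Sfun s k + P) Q) * (e x + e y)) •
          (Finsupp.single (pt (emb Q y)) (1 : ℝ) -
            Finsupp.single (pt (g (emb Q x))) (1 : ℝ))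
        = ∑ k : Fin n → ZMod 2, sgn (sympl (Sfun s k + P) Q) • ((e x + e y) •
          (Finsupp.single (pt (emb Q y)) (1 : ℝ) -
            Finsupp.single (pt (g (emb Q x))) (1 : ℝ))) := by
          simp only [mul_smul]
      _ = (∑ k : Fin n → ZMod 2, sgn (sympl (Sfun s k + P) Q)) • ((e x + e y) •
          (Finsupp.single (pt (emb Q y)) (1 : ℝ) -
            Finsupp.single (pt (g (emb Q x))) (1 : ℝ))) := (Finset.sum_smul).symm
      _ = (F Q * (e x + e y)) •
          (Finsupp.single (pt (emb Q y)) (1 : ℝ) -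
            Finsupp.single (pt (g (emb Q x))) (1 : ℝ)) := by
          rw [claimA, ← mul_smul]
  -- Step 2: rewrite g
  have step2 : (∑ x : Fin n → ZMod 2, ∑ y : Fin n → ZMod 2, ∑ Q : V m,
      (F Q * (e x + e y)) •
        (Finsupp.single (pt (emb Q y)) (1 : ℝ) -
          Finsupp.single (pt (g (emb Q x))) (1 : ℝ)))
      = ∑ x : Fin n → ZMod 2, ∑ y : Fin n → ZMod 2, ∑ Q : V m,
      (F Q * (e x + e y)) •
        (Finsupp.single (pt (emb Q y)) (1 : ℝ) -
          Finsupp.single (pt (emb (Q + Sfun s x) x)) (1 : ℝ)) := by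
    refine Finset.sum_congr rfl fun x _ => Finset.sum_congr rfl fun y _ =>
      Finset.sum_congr rfl fun Q _ => ?_
    by_cases hc : ∀ i, sympl (s i) Q = 0
    · rw [hg x Q hc]
    · have hz : F Q = 0 := by simp only [hF]; rw [if_neg hc, zero_mul]
      rw [hz, zero_mul, zero_smul, zero_smul]
  rw [step1, step2]
  simp only [smul_sub, Finset.sum_sub_distrib]
  rw [sub_eq_zero]
  -- Evaluate both sides
  have hT1 : (∑ x : Fin n → ZMod 2, ∑ y : Fin n → ZMod 2, ∑ Q : V m,
      (F Q * (e x + e y)) • Finsupp.single (pt (emb Q y)) (1 : ℝ))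
      = ∑ y : Fin n → ZMod 2, ∑ Q : V m,
        (F Q * ((2 ^ n : ℝ) * e y)) • Finsupp.single (pt (emb Q y)) (1 : ℝ) := by
    rw [Finset.sum_comm]
    refine Finset.sum_congr rfl fun y _ => ?_
    rw [Finset.sum_comm]
    refine Finset.sum_congr rfl fun Q _ => ?_
    rw [← Finset.sum_smul, ← Finset.mul_sum, hsum1 y]
  have hT2 : (∑ x : Fin n → ZMod 2, ∑ y : Fin n → ZMod 2, ∑ Q : V m,
      (F Q * (e x + e y)) • Finsupp.single (pt (emb (Q + Sfun s x) x)) (1 : ℝ))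
      = ∑ x : Fin n → ZMod 2, ∑ Q : V m,
        (F Q * ((2 ^ n : ℝ) * e x)) • Finsupp.single (pt (emb (Q + Sfun s x) x)) (1 : ℝ) := by
    refine Finset.sum_congr rfl fun x _ => ?_
    rw [Finset.sum_comm]
    refine Finset.sum_congr rfl fun Q _ => ?_
    rw [← Finset.sum_smul, ← Finset.mul_sum]
    congr 1
    rw [show (∑ y : Fin n → ZMod 2, (e x + e y)) = ∑ y : Fin n → ZMod 2, (e y + e x) by
      exact Finset.sum_congr rfl fun y _ => add_comm _ _, hsum1 x]
  rw [hT1, hT2]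
  refine Finset.sum_congr rfl fun x _ => ?_
  refine Fintype.sum_equiv (Equiv.addRight (Sfun s x)) _ _ fun Q => ?_
  simp only [Equiv.coe_addRight]
  rw [hFinv, add_assoc, addV_self, add_zero]
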